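/- Every split of K₆ contains W₆ as a minor. -/

import Mathlib

open SimpleGraph

def SimpleGraph.IsMinorOf {W V : Type*} (H : SimpleGraph W) (G : SimpleGraph V) : Prop :=
  ∃ φ : W → Set V,
    (∀ w, (φ w).Nonempty) ∧
    (∀ w, (G.induce (φ w)).Connected) ∧
    (Pairwise fun w₁ w₂ => Disjoint (φ w₁) (φ w₂)) ∧
    (∀ ⦃w₁ w₂⦄, H.Adj w₁ w₂ → ∃ a ∈ φ w₁, ∃ b ∈ φ w₂, G.Adj a b)

def wheel (n : ℕ) : SimpleGraph (Option (ZMod n)) :=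
  SimpleGraph.fromRel fun a b =>
    (a = none ∧ b ≠ none) ∨ (∃ i j : ZMod n, a = some i ∧ b = some j ∧ j = i + 1)

def K6 : SimpleGraph (Fin 6) := ⊤

def splitGraph {V : Type*} (G : SimpleGraph V) (v : V) (X Y : Set V) :
    SimpleGraph ({u : V // u ≠ v} ⊕ Fin 2) :=
  SimpleGraph.fromRel fun a b =>
    match a, b with
    | .inl u, .inl u' => G.Adj u u'
    | .inl u, .inr i => (i = 0 ∧ (u : V) ∈ X) ∨ (i = 1 ∧ (u : V) ∈ Y)
    | .inr _, .inl _ => False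
    | .inr _, .inr _ => True

def IsSplitData {V : Type*} (G : SimpleGraph V) (v : V) (X Y : Set V) : Prop :=
  X ⊆ G.neighborSet v ∧ Y ⊆ G.neighborSet v ∧ X ∪ Y = G.neighborSet v ∧
    3 ≤ X.ncard ∧ 3 ≤ Y.ncard

lemma singleton_induce_connected {V : Type*} (G : SimpleGraph V) (a : V) :
    (G.induce ({a} : Set V)).Connected := by
  haveI hs : Subsingleton ({a} : Set V) := ⟨fun x y => Subtype.ext (x.2.trans y.2.symm)⟩
  haveI : Nonempty ({a} : Set V) := ⟨⟨a, rfl⟩⟩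
  exact ⟨fun x y => by rw [Subsingleton.elim x y]⟩

set_option maxHeartbeats 3200000 in
lemma stmt15_aux (v : Fin 6) (X Y : Set (Fin 6)) (h : IsSplitData K6 v X Y) :
    (wheel 6).IsMinorOf (splitGraph K6 v X Y) := by
  obtain ⟨hX, hY, hXY, hXc, hYc⟩ := h
  have hnv : ∀ u ∈ X ∪ Y, u ≠ v := by
    rw [hXY]; intro u hu
    exact ((SimpleGraph.mem_neighborSet _ _ _).1 hu).ne'
  have hU : (X ∪ Y).ncard = 5 := by
    rw [hXY]
    have hset : K6.neighborSet v = {v}ᶜ := by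
      ext u; simp [K6, SimpleGraph.mem_neighborSet, ne_comm]
    rw [hset]
    have := Set.ncard_add_ncard_compl ({v} : Set (Fin 6))
    simp [Set.ncard_singleton, Nat.card_eq_fintype_card] at this
    omega
  -- pick w ∈ X ∩ Y
  have hWne : (X ∩ Y).Nonempty := by
    apply Set.nonempty_of_ncard_ne_zero
    have := Set.ncard_union_add_ncard_inter X Y
    omega
  obtain ⟨w, hwX, hwY⟩ := hWne
  -- pick p ∈ X, p ≠ w
  have hPne : ∃ p ∈ X, p ≠ w := by
    by_contra hc
    push_neg at hc
    have : X ⊆ {w} := fun x hx => hc x hx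
    have := Set.ncard_le_ncard this (Set.toFinite _)
    rw [Set.ncard_singleton] at this
    omega
  obtain ⟨p, hpX, hpw⟩ := hPne
  -- pick s ∈ Y, s ≠ w, s ≠ p
  have hSne : ∃ s ∈ Y, s ≠ w ∧ s ≠ p := by
    by_contra hc
    push_neg at hc
    have hsub : Y ⊆ {w, p} := by
      intro y hy
      rcases eq_or_ne y w with h1 | h1
      · exact Or.inl h1
      · exact Or.inr (hc y hy h1)
    have h2 := Set.ncard_le_ncard hsub (Set.toFinite _)
    have h3 : ({w, p} : Set (Fin 6)).ncard ≤ 2 := by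
      have := Set.ncard_insert_le w ({p} : Set (Fin 6))
      simp [Set.ncard_singleton] at this ⊢
      omega
    omega
  obtain ⟨s, hsY, hsw, hsp⟩ := hSne
  -- pick q r distinct outside {v, w, p, s}
  have hT : ∃ a ∈ ({v, w, p, s} : Set (Fin 6))ᶜ, ∃ b ∈ ({v, w, p, s} : Set (Fin 6))ᶜ, a ≠ b := by
    rw [← Set.one_lt_ncard]
    have h4 : ({v, w, p, s} : Set (Fin 6)).ncard ≤ 4 := by
      calc ({v, w, p, s} : Set (Fin 6)).ncard ≤ ({w, p, s} : Set (Fin 6)).ncard + 1 :=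
            Set.ncard_insert_le _ _
        _ ≤ (({p, s} : Set (Fin 6)).ncard + 1) + 1 := by
            have := Set.ncard_insert_le w ({p, s} : Set (Fin 6)); omega
        _ ≤ ((({s} : Set (Fin 6)).ncard + 1) + 1) + 1 := by
            have := Set.ncard_insert_le p ({s} : Set (Fin 6)); omega
        _ ≤ 4 := by simp [Set.ncard_singleton]
    have h5 := Set.ncard_add_ncard_compl ({v, w, p, s} : Set (Fin 6))
    simp [Nat.card_eq_fintype_card] at h5
    omega
  obtain ⟨q, hq, r, hr, hqr⟩ := hT
  simp only [Set.mem_compl_iff, Set.mem_insert_iff, Set.mem_singleton_iff, not_or] at hq hr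
  obtain ⟨hqv, hqw, hqp, hqs⟩ := hq
  obtain ⟨hrv, hrw, hrp, hrs⟩ := hr
  have hwv : w ≠ v := hnv w (Or.inl hwX)
  have hpv : p ≠ v := hnv p (Or.inl hpX)
  have hsv : s ≠ v := hnv s (Or.inr hsY)
  have hwp : w ≠ p := Ne.symm hpw
  have hws : w ≠ s := Ne.symm hsw
  have hps : p ≠ s := Ne.symm hsp
  have hwq : w ≠ q := Ne.symm hqw
  have hwr : w ≠ r := Ne.symm hrw
  have hpq : p ≠ q := Ne.symm hqp
  have hpr : p ≠ r := Ne.symm hrp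
  have hsq : s ≠ q := Ne.symm hqs
  have hsr : s ≠ r := Ne.symm hrs
  have hrq : r ≠ q := Ne.symm hqr
  set f : Option (ZMod 6) → ({u : Fin 6 // u ≠ v} ⊕ Fin 2) := fun o =>
    o.elim (Sum.inl ⟨w, hwv⟩)
      (fun i => ![Sum.inr 0, Sum.inl ⟨p, hpv⟩, Sum.inl ⟨q, hqv⟩, Sum.inl ⟨r, hrv⟩,
        Sum.inl ⟨s, hsv⟩, Sum.inr 1] i) with hf
  have en : f none = Sum.inl ⟨w, hwv⟩ := rfl
  have e0 : f (some 0) = Sum.inr 0 := rfl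
  have e1 : f (some 1) = Sum.inl ⟨p, hpv⟩ := rfl
  have e2 : f (some 2) = Sum.inl ⟨q, hqv⟩ := rfl
  have e3 : f (some 3) = Sum.inl ⟨r, hrv⟩ := rfl
  have e4 : f (some 4) = Sum.inl ⟨s, hsv⟩ := rfl
  have e5 : f (some 5) = Sum.inr 1 := rfl
  refine ⟨fun o => {f o}, fun o => ⟨f o, rfl⟩, fun o => singleton_induce_connected _ _,
    ?_, ?_⟩
  · have hop : ∀ o : Option (ZMod 6), o = none ∨ o = some 0 ∨ o = some 1 ∨ o = some 2 ∨
        o = some 3 ∨ o = some 4 ∨ o = some 5 := by decide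
    intro o1 o2 hne
    rw [Set.disjoint_singleton_left, Set.mem_singleton_iff]
    rcases hop o1 with rfl|rfl|rfl|rfl|rfl|rfl|rfl <;>
      rcases hop o2 with rfl|rfl|rfl|rfl|rfl|rfl|rfl <;>
      simp only [en, e0, e1, e2, e3, e4, e5] <;>
      simp_all [Subtype.ext_iff]
  · have a01 : (0:ZMod 6)+1 = 1 := by decide
    have a11 : (1:ZMod 6)+1 = 2 := by decide
    have a21 : (2:ZMod 6)+1 = 3 := by decide
    have a31 : (3:ZMod 6)+1 = 4 := by decide
    have a41 : (4:ZMod 6)+1 = 5 := by decide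
    have a51 : (5:ZMod 6)+1 = 0 := by decide
    have key1 : ∀ j : ZMod 6, (splitGraph K6 v X Y).Adj (f none) (f (some j)) := by
      have hall : ∀ j : ZMod 6, j = 0 ∨ j = 1 ∨ j = 2 ∨ j = 3 ∨ j = 4 ∨ j = 5 := by decide
      intro j
      rcases hall j with rfl | rfl | rfl | rfl | rfl | rfl <;>
        rw [en] <;> [rw [e0]; rw [e1]; rw [e2]; rw [e3]; rw [e4]; rw [e5]] <;>
        simp [splitGraph, K6, SimpleGraph.fromRel_adj, Subtype.ext_iff] <;> tauto
    have key2 : ∀ i : ZMod 6, (splitGraph K6 v X Y).Adj (f (some i)) (f (some (i+1))) := by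
      have hall : ∀ j : ZMod 6, j = 0 ∨ j = 1 ∨ j = 2 ∨ j = 3 ∨ j = 4 ∨ j = 5 := by decide
      intro i
      rcases hall i with rfl | rfl | rfl | rfl | rfl | rfl <;>
        simp only [a01, a11, a21, a31, a41, a51] <;>
        [(rw [e0, e1]); (rw [e1, e2]); (rw [e2, e3]); (rw [e3, e4]); (rw [e4, e5]); (rw [e5, e0])] <;>
        simp [splitGraph, K6, SimpleGraph.fromRel_adj, Subtype.ext_iff] <;> tauto
    intro w1 w2 hadj
    refine ⟨f w1, rfl, f w2, rfl, ?_⟩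
    rw [wheel, SimpleGraph.fromRel_adj] at hadj
    obtain ⟨hnew, hrel | hrel⟩ := hadj
    · rcases hrel with ⟨h1, h2⟩ | ⟨i, j, h1, h2, h3⟩
      · subst h1
        obtain ⟨j, rfl⟩ := Option.ne_none_iff_exists'.1 h2
        exact key1 j
      · subst h1; subst h2; subst h3
        exact key2 i
    · rcases hrel with ⟨h1, h2⟩ | ⟨i, j, h1, h2, h3⟩
      · subst h1
        obtain ⟨j, rfl⟩ := Option.ne_none_iff_exists'.1 h2
        exact (key1 j).symm
      · subst h1; subst h2; subst h3
        exact (key2 i).symm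

theorem stmt15 (v : Fin 6) (X Y : Set (Fin 6)) (h : IsSplitData K6 v X Y) :
    (wheel 6).IsMinorOf (splitGraph K6 v X Y) := stmt15_aux v X Y h
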